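/- Let i, j ∈ V with i ≠ j. Then the K-vector space V_{ij} = span_K {σ_i^k(t_j) : k ∈ ℤ} has dimension 1 + Σ_{e ∈ E with γ e i ≠ 0} |γ e j|. (Equivalently, the entry a_{ij} = 1 − dim_K V_{ij} of the generalized Cartan matrix associated to the TGW datum (R_E, σ^Γ, t^Γ) equals −Σ_{e ∈ E with γ e i ≠ 0} |γ e j|.) -/

import Mathlib

open MvPolynomial

/-- The defining property of the incidence matrix of a multiquiver: every row has
at most one positive and at most one negative entry. -/
def CondM {V E : Type*} (γ : E → V → ℤ) : Prop :=
  ∀ e : E, (∀ v w : V, 0 < γ e v → 0 < γ e w → v = w) ∧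
    (∀ v w : V, γ e v < 0 → γ e w < 0 → v = w)

/-- `u_{ev} = u_e(u_e+1)⋯(u_e+c−1)` if `c = γ e v > 0`,
`(u_e−1)(u_e−2)⋯(u_e−|c|)` if `c < 0`, and `1` if `c = 0`. -/
noncomputable def uev (K : Type*) [Field K] {E : Type*} (e : E) (c : ℤ) :
    MvPolynomial E K :=
  if 0 < c then ∏ k ∈ Finset.range c.toNat, (X e + C (k : K))
  else ∏ m ∈ Finset.range (-c).toNat, (X e - C ((m : K) + 1))

/-- `t_v = ∏_{e∈E} u_{ev}`. -/
noncomputable def tGamma (K : Type*) [Field K] {V E : Type*} [Fintype E]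
    (γ : E → V → ℤ) (v : V) : MvPolynomial E K :=
  ∏ e : E, uev K e (γ e v)


section TD
open Polynomial
variable {R : Type*} [CommRing R]

/-- total degree ≤ n for a bivariate polynomial written as `R[Z][Y]`. -/
def tdLE (P : Polynomial (Polynomial R)) (n : ℕ) : Prop :=
  ∀ p q : ℕ, n < p + q → (P.coeff p).coeff q = 0

/-- total degree < n. -/
def tdLT (P : Polynomial (Polynomial R)) (n : ℕ) : Prop :=
  ∀ p q : ℕ, n ≤ p + q → (P.coeff p).coeff q = 0

theorem tdLE_mono {P : Polynomial (Polynomial R)} {n n' : ℕ} (h : n ≤ n') (hP : tdLE P n) :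
    tdLE P n' := fun p q hpq => hP p q (lt_of_le_of_lt h hpq)

theorem tdLT_add {P Q : Polynomial (Polynomial R)} {n : ℕ} (hP : tdLT P n) (hQ : tdLT Q n) :
    tdLT (P + Q) n := fun p q h => by
  simp [Polynomial.coeff_add, hP p q h, hQ p q h]

theorem tdLE_mul {P Q : Polynomial (Polynomial R)} {n m : ℕ} (hP : tdLE P n) (hQ : tdLE Q m) :
    tdLE (P * Q) (n + m) := by
  intro p q h
  rw [Polynomial.coeff_mul, Polynomial.finset_sum_coeff]
  apply Finset.sum_eq_zero
  rintro ⟨a, b⟩ hab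
  rw [Finset.HasAntidiagonal.mem_antidiagonal] at hab
  rw [Polynomial.coeff_mul]
  apply Finset.sum_eq_zero
  rintro ⟨c, d⟩ hcd
  rw [Finset.HasAntidiagonal.mem_antidiagonal] at hcd
  rcases lt_or_ge n (a + c) with h1 | h1
  · rw [hP a c h1, zero_mul]
  · rw [hQ b d (by omega), mul_zero]

theorem tdLE_tdLT_mul {P Q : Polynomial (Polynomial R)} {n m : ℕ} (hP : tdLE P n)
    (hQ : tdLT Q m) : tdLT (P * Q) (n + m) := by
  intro p q h
  rw [Polynomial.coeff_mul, Polynomial.finset_sum_coeff]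
  apply Finset.sum_eq_zero
  rintro ⟨a, b⟩ hab
  rw [Finset.HasAntidiagonal.mem_antidiagonal] at hab
  rw [Polynomial.coeff_mul]
  apply Finset.sum_eq_zero
  rintro ⟨c, d⟩ hcd
  rw [Finset.HasAntidiagonal.mem_antidiagonal] at hcd
  rcases lt_or_ge n (a + c) with h1 | h1
  · rw [hP a c h1, zero_mul]
  · rw [hQ b d (by omega), mul_zero]

theorem tdLE_C {r : Polynomial R} {n : ℕ} (h : r.natDegree ≤ n) :
    tdLE (Polynomial.C r : Polynomial (Polynomial R)) n := by
  intro p q hpq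
  rcases Nat.eq_zero_or_pos p with rfl | hp
  · rw [Polynomial.coeff_C_zero]
    exact Polynomial.coeff_eq_zero_of_natDegree_lt (by omega)
  · rw [Polynomial.coeff_C, if_neg (by omega), Polynomial.coeff_zero]

theorem tdLE_prod {ι : Type*} (s : Finset ι) (f : ι → Polynomial (Polynomial R)) (n : ι → ℕ)
    (h : ∀ t ∈ s, tdLE (f t) (n t)) : tdLE (∏ t ∈ s, f t) (∑ t ∈ s, n t) := by
  classical
  induction s using Finset.induction_on with
  | empty =>
    simp only [Finset.prod_empty, Finset.sum_empty]
    intro p q hpq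
    rw [Polynomial.coeff_one]
    split_ifs with h1
    · subst h1; rw [Polynomial.coeff_one, if_neg (by omega)]
    · simp
  | insert a s' hnot ih =>
    rw [Finset.prod_insert hnot, Finset.sum_insert hnot]
    exact tdLE_mul (h a (Finset.mem_insert_self a s'))
      (ih fun t ht => h t (Finset.mem_insert_of_mem ht))

/-- Key lemma: a product of "linear + constant" factors agrees in top degree with the
product of the linear parts. -/
theorem tdLT_prod_sub_prod {ι : Type*} (s : Finset ι) (A r : ι → Polynomial (Polynomial R))
    (hA : ∀ t ∈ s, tdLE (A t) 1) (hr : ∀ t ∈ s, tdLE (r t) 0) :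
    tdLT (∏ t ∈ s, (A t + r t) - ∏ t ∈ s, A t) s.card := by
  classical
  induction s using Finset.induction_on with
  | empty => intro p q h; simp
  | insert a s' hnot ih =>
    have hAa := hA a (Finset.mem_insert_self a s')
    have hra := hr a (Finset.mem_insert_self a s')
    have hA' : ∀ t ∈ s', tdLE (A t) 1 := fun t ht => hA t (Finset.mem_insert_of_mem ht)
    have hr' : ∀ t ∈ s', tdLE (r t) 0 := fun t ht => hr t (Finset.mem_insert_of_mem ht)
    have hPs : tdLE (∏ t ∈ s', (A t + r t)) s'.card := by
      have := tdLE_prod s' (fun t => A t + r t) (fun _ => 1) (fun t ht => by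
        intro p q h
        simp only [Polynomial.coeff_add]
        rw [hA' t ht p q h, hr' t ht p q (by omega), add_zero])
      simpa using this
    rw [Finset.prod_insert hnot, Finset.prod_insert hnot, Finset.card_insert_of_notMem hnot]
    have key : (A a + r a) * ∏ t ∈ s', (A t + r t) - A a * ∏ t ∈ s', A t
        = A a * (∏ t ∈ s', (A t + r t) - ∏ t ∈ s', A t) + r a * ∏ t ∈ s', (A t + r t) := by
      ring
    rw [key]
    apply tdLT_add
    · have := tdLE_tdLT_mul hAa (ih hA' hr')
      intro p q h
      exact this p q (by omega)
    · have : tdLE (r a * ∏ t ∈ s', (A t + r t)) (0 + s'.card) := tdLE_mul hra hPs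
      intro p q h
      exact this p q (by omega)

end TD



theorem linearIndependent_of_natDegree_strictAnti {K : Type*} [Field K] {n : ℕ}
    (v : Fin n → Polynomial K) (hv0 : ∀ m, v m ≠ 0)
    (hdeg : ∀ a b : Fin n, a < b → (v b).natDegree < (v a).natDegree) :
    LinearIndependent K v := by
  rw [linearIndependent_iff']
  intro s
  induction s using Finset.strongInduction with
  | _ s ih =>
    intro g hsum i hi
    have hne : s.Nonempty := ⟨i, hi⟩
    set m₀ := s.min' hne with hm₀
    have hm₀s : m₀ ∈ s := s.min'_mem hne
    have hg0 : g m₀ = 0 := by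
      have hc := congrArg (fun p => Polynomial.coeff p ((v m₀).natDegree)) hsum
      simp only [Polynomial.finset_sum_coeff, Polynomial.coeff_smul, Polynomial.coeff_zero] at hc
      rw [Finset.sum_eq_single m₀] at hc
      · have hlc : (v m₀).coeff ((v m₀).natDegree) ≠ 0 :=
          Polynomial.leadingCoeff_ne_zero.mpr (hv0 m₀)
        have hc2 : g m₀ = 0 ∨ v m₀ = 0 := by simpa [smul_eq_mul, hlc] using hc
        exact hc2.resolve_right (hv0 m₀)
      · intro b hb hbne
        have hlt : m₀ < b := lt_of_le_of_ne (s.min'_le b hb) (Ne.symm hbne)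
        rw [Polynomial.coeff_eq_zero_of_natDegree_lt (hdeg m₀ b hlt), smul_zero]
      · intro h; exact absurd hm₀s h
    rcases eq_or_ne i m₀ with rfl | hne'
    · exact hg0
    · refine ih (s.erase m₀) (Finset.erase_ssubset hm₀s) g ?_ i
        (Finset.mem_erase.mpr ⟨hne', hi⟩)
      rw [Finset.sum_erase s (by rw [hg0, zero_smul])]
      exact hsum


theorem aeval_uev {K : Type*} [Field K] {E : Type*} {S : Type*} [CommRing S] [Algebra K S]
    (f : E → S) (e : E) (c : ℤ) :
    MvPolynomial.aeval f (uev K e c) =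
      if 0 < c then ∏ k ∈ Finset.range c.toNat, (f e + algebraMap K S (k : K))
      else ∏ m ∈ Finset.range (-c).toNat, (f e - algebraMap K S ((m : K) + 1)) := by
  unfold uev
  split_ifs <;> simp [map_prod]


/-- For `i ≠ j`, the space `V_{ij} = span_K {σ_i^k(t_j) : k ∈ ℤ}` has dimension
`1 + Σ_{e : γ e i ≠ 0} |γ e j|`; equivalently, the entry `a_{ij} = 1 − dim V_{ij}`
of the generalized Cartan matrix of the TGW datum `(R_E, σ^Γ, t^Γ)` equals
`−Σ_{e : γ e i ≠ 0} |γ e j|`. -/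
theorem dim_Vij {K V E : Type*} [Field K] [CharZero K] [Fintype V] [Fintype E]
    (γ : E → V → ℤ) (hM : CondM γ)
    (σ : V → (MvPolynomial E K ≃ₐ[K] MvPolynomial E K))
    (hσ : ∀ (v : V) (e : E), σ v (X e) = X e - C ((γ e v : ℤ) : K))
    (i j : V) (hij : i ≠ j) :
    Module.finrank K
        (Submodule.span K (Set.range fun k : ℤ => (σ i ^ k) (tGamma K γ j))) =
      1 + ∑ e ∈ Finset.univ.filter (fun e : E => γ e i ≠ 0), (γ e j).natAbs := by
  classical
  have hCk : ∀ (k : ℤ) (a : K), (σ i ^ k) (C a : MvPolynomial E K) = C a := by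
    intro k a
    rw [← MvPolynomial.algebraMap_eq]
    exact AlgEquiv.commutes _ a
  have hC1 : ∀ a : K, (σ i) (C a : MvPolynomial E K) = C a := by
    intro a
    rw [← MvPolynomial.algebraMap_eq]
    exact AlgEquiv.commutes _ a
  have hinv : ∀ e : E, (σ i)⁻¹ (X e) = X e + C ((γ e i : ℤ) : K) := by
    intro e
    have h1 : σ i (X e + C ((γ e i : ℤ) : K)) = X e := by
      rw [map_add, hσ, hC1]; ring
    show (σ i).symm (X e) = _
    rw [AlgEquiv.symm_apply_eq]
    exact h1.symm
  have hσk : ∀ (k : ℤ) (e : E), (σ i ^ k) (X e) = X e - C ((k * γ e i : ℤ) : K) := by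
    intro k
    induction k using Int.induction_on with
    | zero => intro e; simp
    | succ n ih =>
      intro e
      have h2 : (σ i ^ ((n : ℤ) + 1)) (X e) = (σ i ^ (n : ℤ)) (σ i (X e)) := by
        rw [zpow_add_one, AlgEquiv.mul_apply]
      rw [h2, hσ, map_sub, ih e, hCk]
      rw [sub_sub, ← C_add]
      congr 1
      push_cast
      ring
    | pred n ih =>
      intro e
      have h2 : (σ i ^ (-(n : ℤ) - 1)) (X e) = (σ i ^ (-(n : ℤ))) ((σ i)⁻¹ (X e)) := by
        rw [zpow_sub_one, AlgEquiv.mul_apply]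
      rw [h2, hinv, map_add, ih e, hCk]
      rw [sub_add, ← C_sub]
      congr 1
      push_cast
      ring
  -- Step B
  set ψ : MvPolynomial E K →ₐ[K] Polynomial (MvPolynomial E K) :=
    MvPolynomial.aeval (fun e => Polynomial.C (X e) -
      Polynomial.C (C ((γ e i : ℤ) : K)) * Polynomial.X) with hψ
  set Q : Polynomial (MvPolynomial E K) := ψ (tGamma K γ j) with hQ
  have hfk : ∀ k : ℤ, (σ i ^ k) (tGamma K γ j) = Polynomial.eval (C ((k : ℤ) : K)) Q := by
    intro k
    have hhom : ((σ i ^ k) : MvPolynomial E K ≃ₐ[K] MvPolynomial E K).toAlgHom =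
        ((Polynomial.aeval (C ((k : ℤ) : K) : MvPolynomial E K)).restrictScalars K).comp ψ := by
      apply MvPolynomial.algHom_ext
      intro e
      simp only [AlgEquiv.toAlgHom_eq_coe, AlgHom.coe_coe, AlgHom.coe_comp,
        AlgHom.coe_restrictScalars', Function.comp_apply, hψ, MvPolynomial.aeval_X,
        map_sub, map_mul, Polynomial.aeval_C, Polynomial.aeval_X]
      rw [AlgEquiv.coe_toAlgHom, hσk k e]
      simp only [Algebra.algebraMap_self, RingHom.id_apply]
      rw [← C_mul]
      congr 2
      push_cast
      ring
    have := congrArg (fun F : MvPolynomial E K →ₐ[K] MvPolynomial E K => F (tGamma K γ j)) hhom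
    simpa using this
  let c : E → ℕ := fun e => (γ e j).natAbs
  set d : ℕ := ∑ e ∈ Finset.univ.filter (fun e : E => γ e i ≠ 0), c e with hd
  have halg : ∀ a : K, (algebraMap K (Polynomial (MvPolynomial E K)) a) = Polynomial.C (C a) := by
    intro a
    rw [IsScalarTower.algebraMap_apply K (MvPolynomial E K) (Polynomial (MvPolynomial E K)),
      MvPolynomial.algebraMap_eq, Polynomial.algebraMap_eq]
  have hψu : ∀ e : E, (ψ (uev K e (γ e j))).natDegree ≤ (if γ e i = 0 then 0 else c e) := by
    intro e
    have hfacd : ∀ a : K,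
        ((Polynomial.C (X e) - Polynomial.C (C ((γ e i : ℤ) : K)) * Polynomial.X
          + Polynomial.C (C a))).natDegree ≤ if γ e i = 0 then 0 else 1 := by
      intro a
      split_ifs with h
      · simp only [h, Int.cast_zero, map_zero, zero_mul, sub_zero, ← Polynomial.C_add]
        simp
      · refine le_trans (Polynomial.natDegree_add_le _ _) ?_
        refine max_le (le_trans (Polynomial.natDegree_sub_le _ _) ?_) (by simp)
        refine max_le (by simp) (le_trans (Polynomial.natDegree_C_mul_le _ _) (by simp))
    have himg := aeval_uev (K := K)
      (f := fun e => (Polynomial.C (X e) - Polynomial.C (C ((γ e i : ℤ) : K)) * Polynomial.X))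
      e (γ e j)
    rw [hψ]
    rcases lt_or_ge 0 (γ e j) with h | h
    · rw [himg, if_pos h]
      refine le_trans (Polynomial.natDegree_prod_le _ _) ?_
      refine le_trans (Finset.sum_le_card_nsmul _ _ (if γ e i = 0 then 0 else 1)
        (fun k _ => by rw [halg]; exact hfacd _)) ?_
      rw [Finset.card_range, smul_eq_mul]
      split_ifs with h2
      · simp
      · rw [mul_one]
        simp only [c]
        omega
    · rw [himg, if_neg (not_lt.mpr h)]
      refine le_trans (Polynomial.natDegree_prod_le _ _) ?_
      refine le_trans (Finset.sum_le_card_nsmul _ _ (if γ e i = 0 then 0 else 1)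
        (fun k _ => by
          rw [halg, sub_eq_add_neg, ← map_neg, ← map_neg]
          exact hfacd _)) ?_
      rw [Finset.card_range, smul_eq_mul]
      split_ifs with h2
      · simp
      · rw [mul_one]
        simp only [c]
        omega
  have hdegQ : Q.natDegree ≤ d := by
    rw [hQ]
    rw [show tGamma K γ j = ∏ e : E, uev K e (γ e j) from rfl, map_prod]
    refine le_trans (Polynomial.natDegree_prod_le _ _) ?_
    refine le_trans (Finset.sum_le_sum fun e _ => hψu e) ?_
    rw [hd, Finset.sum_filter]
    apply le_of_eq
    apply Finset.sum_congr rfl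
    intro e _
    by_cases h : γ e i = 0 <;> simp [h]
  have hspan : Submodule.span K (Set.range fun k : ℤ => (σ i ^ k) (tGamma K γ j)) =
      Submodule.span K (Set.range fun m : Fin (d+1) => Q.coeff (m : ℕ)) := by
    apply le_antisymm
    · rw [Submodule.span_le]
      rintro _ ⟨k, rfl⟩
      simp only [SetLike.mem_coe]
      rw [hfk k, Polynomial.eval_eq_sum_range' (Nat.lt_succ_of_le hdegQ)]
      apply Submodule.sum_mem
      intro m hm
      rw [← C_pow, mul_comm, ← MvPolynomial.smul_eq_C_mul]
      exact Submodule.smul_mem _ _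
        (Submodule.subset_span ⟨⟨m, Finset.mem_range.mp hm⟩, rfl⟩)
    · rw [Submodule.span_le]
      rintro _ ⟨m, rfl⟩
      simp only [SetLike.mem_coe]
      set A : Matrix (Fin (d+1)) (Fin (d+1)) K :=
        Matrix.vandermonde (fun t => ((t : ℕ) : K)) with hA
      have hdet : A.det ≠ 0 := by
        rw [hA, Matrix.det_vandermonde_ne_zero_iff]
        intro a b hab
        exact Fin.val_injective (Nat.cast_injective hab)
      have hAinv : A⁻¹ * A = 1 := Matrix.nonsing_inv_mul A (isUnit_iff_ne_zero.mpr hdet)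
      have hfval : ∀ t : Fin (d+1),
          (σ i ^ ((t : ℕ) : ℤ)) (tGamma K γ j)
            = ∑ n : Fin (d+1), (A t n) • Q.coeff (n : ℕ) := by
        intro t
        rw [hfk, Polynomial.eval_eq_sum_range' (Nat.lt_succ_of_le hdegQ),
          ← Fin.sum_univ_eq_sum_range]
        apply Finset.sum_congr rfl
        intro n _
        rw [← C_pow, mul_comm, ← MvPolynomial.smul_eq_C_mul, hA, Matrix.vandermonde_apply]
        norm_num
      have key : Q.coeff (m : ℕ)
          = ∑ t : Fin (d+1), A⁻¹ m t • ((σ i ^ ((t : ℕ) : ℤ)) (tGamma K γ j)) := by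
        simp only [hfval, Finset.smul_sum, smul_smul]
        rw [Finset.sum_comm]
        have : ∀ n : Fin (d+1),
            ∑ t : Fin (d+1), (A⁻¹ m t * A t n) • Q.coeff (n : ℕ)
              = ((1 : Matrix (Fin (d+1)) (Fin (d+1)) K) m n) • Q.coeff (n : ℕ) := by
          intro n
          rw [← Finset.sum_smul, ← Matrix.mul_apply, hAinv]
        rw [Finset.sum_congr rfl (fun n _ => this n)]
        simp [Matrix.one_apply]
      rw [key]
      apply Submodule.sum_mem
      intro t _
      exact Submodule.smul_mem _ _ (Submodule.subset_span ⟨((t : ℕ) : ℤ), rfl⟩)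
  -- Step D : linear independence of the coefficients
  set N : ℕ := ∑ e : E, c e with hNdef
  set d₀ : ℕ := ∑ e ∈ Finset.univ.filter (fun e : E => ¬ γ e i ≠ 0), c e with hd₀
  have hN : d + d₀ = N := by
    rw [hNdef, hd, hd₀, Finset.sum_filter_add_sum_filter_not]
  set πe : E → Polynomial K := fun e =>
    if γ e i = 0 then Polynomial.X else Polynomial.C (-((γ e i : ℤ) : K)) * Polynomial.X with hπe
  set π : MvPolynomial E K →ₐ[K] Polynomial K := MvPolynomial.aeval πe with hπ
  set B : Polynomial (Polynomial K) := Q.map (π : MvPolynomial E K →+* Polynomial K) with hBdef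
  have hBcoeff : ∀ m : ℕ, B.coeff m = π (Q.coeff m) := fun m => Polynomial.coeff_map _ m
  have halg2 : ∀ a : K, (algebraMap K (Polynomial (Polynomial K)) a)
      = Polynomial.C (Polynomial.C a) := by
    intro a
    rw [IsScalarTower.algebraMap_apply K (Polynomial K) (Polynomial (Polynomial K)),
      Polynomial.algebraMap_eq, Polynomial.algebraMap_eq]
  set L : E → Polynomial (Polynomial K) := fun e =>
    Polynomial.C (πe e) - Polynomial.C (Polynomial.C ((γ e i : ℤ) : K)) * Polynomial.X with hL
  have hB : B = MvPolynomial.aeval L (tGamma K γ j) := by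
    have hcomp : (Polynomial.mapAlgHom π).comp ψ = MvPolynomial.aeval L := by
      apply MvPolynomial.algHom_ext
      intro e
      simp only [AlgHom.coe_comp, Function.comp_apply, hψ, MvPolynomial.aeval_X,
        Polynomial.coe_mapAlgHom, Polynomial.map_sub, Polynomial.map_mul, Polynomial.map_C,
        Polynomial.map_X, hL, hπ, MvPolynomial.aeval_C, Polynomial.algebraMap_eq, AlgHom.coe_coe,
        RingHom.coe_coe]
    have := congrArg (fun F : MvPolynomial E K →ₐ[K] Polynomial (Polynomial K) =>
      F (tGamma K γ j)) hcomp
    simpa [hBdef, hQ] using this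
  set κ : E → ℕ → K := fun e k => if 0 < γ e j then (k : K) else -((k : K) + 1) with hκ
  set s : Finset ((_ : E) × ℕ) := Finset.univ.sigma (fun e => Finset.range (c e)) with hs
  have hcard : s.card = N := by
    rw [hs, Finset.card_sigma]
    simp [hNdef]
  have hprod : B = ∏ x ∈ s, (L x.1 + Polynomial.C (Polynomial.C (κ x.1 x.2))) := by
    rw [hB, show tGamma K γ j = ∏ e : E, uev K e (γ e j) from rfl, map_prod, hs,
      Finset.prod_sigma]
    apply Finset.prod_congr rfl
    intro e _
    rw [aeval_uev (K := K) (f := L) e (γ e j)]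
    rcases lt_trichotomy (γ e j) 0 with h | h | h
    · rw [if_neg (by omega)]
      have hrange : (-(γ e j)).toNat = c e := by simp only [c]; omega
      rw [hrange]
      apply Finset.prod_congr rfl
      intro k _
      rw [halg2]
      simp only [hκ, if_neg (by omega : ¬ 0 < γ e j)]
      rw [sub_eq_add_neg, ← map_neg, ← map_neg]
    · rw [if_neg (by omega)]
      have : c e = 0 := by simp only [c]; omega
      rw [this, show (-(γ e j)).toNat = 0 by omega]
      simp
    · rw [if_pos h]
      have hrange : (γ e j).toNat = c e := by simp only [c]; omega
      rw [hrange]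
      apply Finset.prod_congr rfl
      intro k _
      rw [halg2]
      simp only [hκ, if_pos h]
  have hLcoeff : ∀ (e : E) (p : ℕ), (L e).coeff p =
      if p = 0 then πe e else (if p = 1 then -Polynomial.C ((γ e i : ℤ) : K) else 0) := by
    intro e p
    simp only [hL]
    rw [Polynomial.coeff_sub, Polynomial.coeff_C, Polynomial.coeff_C_mul, Polynomial.coeff_X]
    rcases p with _ | _ | p <;> simp
  have hLtd : ∀ e : E, tdLE (L e) 1 := by
    intro e p q hpq
    rw [hLcoeff]
    split_ifs with h1 h2
    · subst h1
      simp only [hπe]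
      split_ifs with h
      · rw [Polynomial.coeff_X, if_neg (by omega)]
      · rw [Polynomial.coeff_C_mul, Polynomial.coeff_X, if_neg (by omega), mul_zero]
    · subst h2
      rw [Polynomial.coeff_neg, Polynomial.coeff_C, if_neg (by omega), neg_zero]
    · simp
  have hrtd : ∀ (a : K), tdLE ((Polynomial.C (Polynomial.C a)) : Polynomial (Polynomial K)) 0 :=
    fun a => tdLE_C (by simp)
  set T : Polynomial (Polynomial K) := ∏ x ∈ s, L x.1 with hT
  have hS : tdLT (B - T) N := by
    rw [hprod, hT, ← hcard]
    exact tdLT_prod_sub_prod s (fun x => L x.1) (fun x => Polynomial.C (Polynomial.C (κ x.1 x.2)))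
      (fun x _ => hLtd x.1) (fun x _ => hrtd _)
  set β : K := ∏ e ∈ Finset.univ.filter (fun e : E => γ e i ≠ 0), (-((γ e i : ℤ) : K)) ^ (c e)
    with hβdef
  have hβ : β ≠ 0 := by
    rw [hβdef]
    apply Finset.prod_ne_zero_iff.mpr
    intro e he
    apply pow_ne_zero
    rw [Finset.mem_filter] at he
    simp only [ne_eq, neg_eq_zero, Int.cast_eq_zero]
    exact he.2
  have hTeq : T = β • ((Polynomial.X + Polynomial.C (Polynomial.X : Polynomial K)) ^ d
      * Polynomial.C ((Polynomial.X : Polynomial K) ^ d₀)) := by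
    rw [hT, Finset.prod_sigma]
    have : ∀ e : E, ∏ k ∈ Finset.range (c e), L e = L e ^ (c e) := by
      intro e; rw [Finset.prod_const, Finset.card_range]
    rw [Finset.prod_congr rfl (fun e _ => this e)]
    rw [← Finset.prod_filter_mul_prod_filter_not Finset.univ (fun e => γ e i ≠ 0)]
    have h1 : ∀ e ∈ Finset.univ.filter (fun e : E => γ e i ≠ 0),
        L e ^ (c e) = ((-((γ e i : ℤ) : K)) ^ (c e)) •
          ((Polynomial.X + Polynomial.C (Polynomial.X : Polynomial K)) ^ (c e)) := by
      intro e he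
      rw [Finset.mem_filter] at he
      have hLe : L e = (-((γ e i : ℤ) : K)) •
          (Polynomial.X + Polynomial.C (Polynomial.X : Polynomial K)) := by
        simp only [hL, hπe]
        rw [if_neg he.2, Algebra.smul_def, halg2]
        simp only [map_neg, Polynomial.C_mul]
        ring
      rw [hLe, smul_pow]
    have h2 : ∀ e ∈ Finset.univ.filter (fun e : E => ¬ γ e i ≠ 0),
        L e ^ (c e) = Polynomial.C ((Polynomial.X : Polynomial K) ^ (c e)) := by
      intro e he
      rw [Finset.mem_filter] at he
      have he2 : γ e i = 0 := by simpa using he.2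
      have hLe : L e = Polynomial.C (Polynomial.X : Polynomial K) := by
        simp only [hL, hπe]
        rw [if_pos he2, he2]
        simp
      rw [hLe, ← Polynomial.C_pow]
    rw [Finset.prod_congr rfl h1, Finset.prod_congr rfl h2]
    have hsmulprod : ∏ e ∈ Finset.univ.filter (fun e : E => γ e i ≠ 0),
        ((-((γ e i : ℤ) : K)) ^ (c e)) •
          ((Polynomial.X + Polynomial.C (Polynomial.X : Polynomial K)) ^ (c e))
        = β • ∏ e ∈ Finset.univ.filter (fun e : E => γ e i ≠ 0),
          ((Polynomial.X + Polynomial.C (Polynomial.X : Polynomial K)) ^ (c e)) := by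
      simp only [Algebra.smul_def, hβdef, map_prod]
      rw [Finset.prod_mul_distrib]
    rw [hsmulprod, Finset.prod_pow_eq_pow_sum, ← map_prod,
      Finset.prod_pow_eq_pow_sum, ← hd, ← hd₀, smul_mul_assoc]
  have hTcoeff : ∀ m : ℕ, m ≤ d → T.coeff m
      = (β * (d.choose m : K)) • (Polynomial.X : Polynomial K) ^ (N - m) := by
    intro m hm
    rw [hTeq, Polynomial.coeff_smul, Polynomial.coeff_mul_C, Polynomial.coeff_X_add_C_pow]
    have hNm : N - m = (d - m) + d₀ := by omega
    rw [hNm, pow_add]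
    rw [Algebra.smul_def, Algebra.smul_def, map_mul, Polynomial.algebraMap_eq,
      ← Polynomial.C_eq_natCast]
    ring
  have hBm : ∀ m : Fin (d+1), (B.coeff (m : ℕ)).natDegree = N - (m : ℕ)
      ∧ B.coeff (m : ℕ) ≠ 0 := by
    intro m
    have hm : (m : ℕ) ≤ d := Nat.lt_succ_iff.mp m.isLt
    have hlead : (B.coeff (m : ℕ)).coeff (N - (m : ℕ)) = β * (d.choose (m : ℕ) : K) := by
      have hsplit : B.coeff (m : ℕ) = T.coeff (m : ℕ) + (B - T).coeff (m : ℕ) := by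
        rw [Polynomial.coeff_sub]; ring
      rw [hsplit, Polynomial.coeff_add, hS (m : ℕ) (N - (m : ℕ)) (by omega),
        hTcoeff (m : ℕ) hm, add_zero, Polynomial.coeff_smul, Polynomial.coeff_X_pow,
        if_pos rfl, smul_eq_mul, mul_one]
    have hleadne : (B.coeff (m : ℕ)).coeff (N - (m : ℕ)) ≠ 0 := by
      rw [hlead]
      apply mul_ne_zero hβ
      exact_mod_cast Nat.cast_ne_zero.mpr (Nat.choose_pos hm).ne'
    have hhigh : ∀ q : ℕ, N - (m : ℕ) < q → (B.coeff (m : ℕ)).coeff q = 0 := by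
      intro q hq
      have hsplit : B.coeff (m : ℕ) = T.coeff (m : ℕ) + (B - T).coeff (m : ℕ) := by
        rw [Polynomial.coeff_sub]; ring
      rw [hsplit, Polynomial.coeff_add, hS (m : ℕ) q (by omega), hTcoeff (m : ℕ) hm,
        add_zero, Polynomial.coeff_smul, Polynomial.coeff_X_pow, if_neg (by omega),
        smul_eq_mul, mul_zero]
    constructor
    · exact le_antisymm (Polynomial.natDegree_le_iff_coeff_eq_zero.mpr hhigh)
        (Polynomial.le_natDegree_of_ne_zero hleadne)
    · intro h0
      rw [h0, Polynomial.coeff_zero] at hleadne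
      exact hleadne rfl
  have hLI : LinearIndependent K (fun m : Fin (d+1) => Q.coeff (m : ℕ)) := by
    apply LinearIndependent.of_comp (π.toLinearMap)
    have hfun : (π.toLinearMap ∘ fun m : Fin (d+1) => Q.coeff (m : ℕ))
        = fun m : Fin (d+1) => B.coeff (m : ℕ) := by
      funext m
      simp [hBcoeff]
    rw [hfun]
    apply linearIndependent_of_natDegree_strictAnti
    · exact fun m => (hBm m).2
    · intro a b hab
      rw [(hBm a).1, (hBm b).1]
      have hb : (b : ℕ) ≤ d := Nat.lt_succ_iff.mp b.isLt
      have : d ≤ N := by omega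
      omega
  rw [hspan, finrank_span_eq_card hLI, Fintype.card_fin, hd]
  simp only [c]
  omega
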